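/- arXiv:2605.15732 — 2 statements merged into one kernel-verified Lean document; each statement's English description precedes it below -/
import Mathlib

section
/- Soundness of the GR hypersequent rule ■:r₁: if the GR Hilbert system derives H ∨ □(□A ⊃ A), then it derives H ∨ ■A ∨ □⊥. -/
/-- Formulas of the bimodal logic GR: propositional variables, ⊥, ¬, ∧,
Gödel box `box` (□) and Rosser box `rbox` (■). -/
inductive GRFormula : Type
  | var : Nat → GRFormula
  | bot : GRFormula
  | neg : GRFormula → GRFormula
  | and : GRFormula → GRFormula → GRFormula
  | box : GRFormula → GRFormula
  | rbox : GRFormula → GRFormula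

namespace GRFormula

/-- A ⊃ B defined as ¬(A ∧ ¬B). -/
def impl (A B : GRFormula) : GRFormula := neg (and A (neg B))

/-- A ∨ B defined as ¬(¬A ∧ ¬B). -/
def or (A B : GRFormula) : GRFormula := neg (and (neg A) (neg B))

/-- ◇A := ¬□¬A. -/
def dia (A : GRFormula) : GRFormula := neg (box (neg A))

/-- A ≡ B := (A ⊃ B) ∧ (B ⊃ A). -/
def iff (A B : GRFormula) : GRFormula := and (impl A B) (impl B A)

/-- ⊤ := ¬⊥. -/
def top : GRFormula := neg bot

/-- Propositional tautology: true under every boolean valuation that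
respects ⊥, ¬, ∧ (treating modal formulas as atoms). -/
def IsTaut (A : GRFormula) : Prop :=
  ∀ v : GRFormula → Bool,
    v bot = false →
    (∀ B, v (neg B) = !v B) →
    (∀ B C, v (and B C) = (v B && v C)) →
    v A = true

end GRFormula

open GRFormula

/-- Hilbert-style derivability in the bimodal logic GR. -/
inductive GRProof : GRFormula → Prop
  | taut {A} : IsTaut A → GRProof A
  | axK (A B) : GRProof (impl (box (impl A B)) (impl (box A) (box B)))
  | axLob (A) : GRProof (impl (box (impl (box A) A)) (box A))
  | axRG (A) : GRProof (impl (rbox A) (box A))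
  | axGGR (A) : GRProof (impl (box A) (box (rbox A)))
  | axGR (A) : GRProof (impl (box A) (or (box bot) (rbox A)))
  | axDia (A) : GRProof (impl (dia (rbox A)) (dia A))
  | mp {A B} : GRProof (impl A B) → GRProof A → GRProof B
  | nec {A} : GRProof A → GRProof (box A)
  | conec {A} : GRProof (box A) → GRProof A


lemma isTaut_syll (P Q R : GRFormula) :
    IsTaut (impl (impl P Q) (impl (impl Q R) (impl P R))) := by
  intro v hb hn ha
  simp only [GRFormula.impl, hn, ha]
  cases v P <;> cases v Q <;> cases v R <;> simp

lemma isTaut_cut (H Y X : GRFormula) :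
    IsTaut (impl (impl Y X) (impl (or H Y) (or H X))) := by
  intro v hb hn ha
  simp only [GRFormula.impl, GRFormula.or, hn, ha]
  cases v H <;> cases v Y <;> cases v X <;> simp

lemma isTaut_swap (H P Q : GRFormula) :
    IsTaut (impl (or H (or P Q)) (or H (or Q P))) := by
  intro v hb hn ha
  simp only [GRFormula.impl, GRFormula.or, hn, ha]
  cases v H <;> cases v P <;> cases v Q <;> simp

theorem gr_rbox_r1_sound (H A : GRFormula)
    (h : GRProof (or H (box (impl (box A) A)))) :
    GRProof (or H (or (rbox A) (box bot))) := by
  have h1 : GRProof (impl (box (impl (box A) A)) (or (box bot) (rbox A))) :=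
    GRProof.mp (GRProof.mp (GRProof.taut (isTaut_syll _ _ _)) (GRProof.axLob A))
      (GRProof.axGR A)
  have h2 : GRProof (or H (or (box bot) (rbox A))) :=
    GRProof.mp (GRProof.mp (GRProof.taut (isTaut_cut H _ _)) h1) h
  exact GRProof.mp (GRProof.taut (isTaut_swap H _ _)) h2
end

section
/- In the Hilbert-style system GR, the formula □p ∧ ■q ⊃ (□⊥ ∨ ■(p ∧ q)) is derivable, and hence □p ∧ ■q ⊃ □(p ∧ q) is derivable. -/
open GRFormula

lemma taut_pair (A B : GRFormula) : IsTaut (impl A (impl B (and A B))) := by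
  intro v hb hn ha
  simp only [GRFormula.impl, hn, ha]
  cases v A <;> cases v B <;> rfl

lemma taut_comp (A B C : GRFormula) :
    IsTaut (impl (impl A B) (impl (impl B C) (impl A C))) := by
  intro v hb hn ha
  simp only [GRFormula.impl, hn, ha]
  cases v A <;> cases v B <;> cases v C <;> rfl

lemma taut_combine (X Y Z W : GRFormula) :
    IsTaut (impl (impl X (impl Y Z)) (impl (impl W Y) (impl (and X W) Z))) := by
  intro v hb hn ha
  simp only [GRFormula.impl, hn, ha]
  cases v X <;> cases v Y <;> cases v Z <;> cases v W <;> rfl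

lemma gr_chain {A B C : GRFormula} (h1 : GRProof (impl A B))
    (h2 : GRProof (impl B C)) : GRProof (impl A C) :=
  GRProof.mp (GRProof.mp (GRProof.taut (taut_comp A B C)) h1) h2

lemma gr_box_and (p q : GRFormula) :
    GRProof (impl (and (box p) (rbox q)) (box (and p q))) := by
  have h1 : GRProof (impl (box p) (box (impl q (and p q)))) :=
    GRProof.mp (GRProof.axK p (impl q (and p q)))
      (GRProof.nec (GRProof.taut (taut_pair p q)))
  have h2 : GRProof (impl (box p) (impl (box q) (box (and p q)))) :=
    gr_chain h1 (GRProof.axK q (and p q))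
  exact GRProof.mp
    (GRProof.mp (GRProof.taut (taut_combine (box p) (box q) (box (and p q)) (rbox q))) h2)
    (GRProof.axRG q)

theorem gr_box_rbox_and :
    GRProof (impl (and (box (var 0)) (rbox (var 1)))
      (or (box bot) (rbox (and (var 0) (var 1))))) ∧
    GRProof (impl (and (box (var 0)) (rbox (var 1)))
      (box (and (var 0) (var 1)))) := by
  constructor
  · exact gr_chain (gr_box_and (var 0) (var 1)) (GRProof.axGR (and (var 0) (var 1)))
  · exact gr_box_and (var 0) (var 1)
end
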